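/- For every m ∈ ℤ and p ≥ 1, G_m^{[p]} − (x₁/(1+βx₁))·G_{m−1}^{[p]} − (x₁/(1+βx₁))·β·G_m^{[p]} = G_m^{[p]}|_{x₁=0}, where x₁/(1+βx₁) = x₁·Σ_{s≥0}(−βx₁)^s ∈ R and f|_{x₁=0} denotes the result of substituting x₁ = 0 in f ∈ R. -/

import Mathlib

/- Common setup: `R = ℤ[β][[x₀,x₁,x₂,…]]` with `β = Polynomial.X`; only the
variables `x i` for `i ≥ 1` are used in the statements. -/

attribute [local instance] Classical.propDecidable

noncomputable section

abbrev A : Type := Polynomial ℤ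
abbrev R : Type := MvPowerSeries ℕ A

/-- the element β -/
def bR : R := MvPowerSeries.C (σ := ℕ) (R := A) Polynomial.X

/-- the variable `x i` -/
def Xv (i : ℕ) : R := MvPowerSeries.X i

/-- total degree of a monomial -/
def degSum (d : ℕ →₀ ℕ) : ℕ := d.sum fun _ n => n

/-- the ring automorphism `s i` exchanging `x i` and `x (i+1)` -/
def sOp (i : ℕ) (f : R) : R := fun d => f (Finsupp.equivMapDomain (Equiv.swap i (i+1)) d)

/-- the divided difference operator `π i`, characterized by
`(x i - x (i+1)) * π i f = (1 + β x (i+1)) f - (1 + β x i) (s i f)`. -/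
def ddiff (i : ℕ) (f : R) : R :=
  Classical.epsilon fun gq : R =>
    (Xv i - Xv (i+1)) * gq = (1 + bR * Xv (i+1)) * f - (1 + bR * Xv i) * sOp i f

/-- complete homogeneous symmetric function of degree `j` in the variables `x_q, …, x_p` -/
def hsym (q p : ℕ) (j : ℤ) : R := fun d =>
  if (∀ k ∈ d.support, q ≤ k ∧ k ≤ p) ∧ (degSum d : ℤ) = j then 1 else 0

/-- `∏_{i=q}^{p} (1 + β x_i)` -/
def prodOneAdd (q p : ℕ) : R := ∏ i ∈ Finset.Icc q p, (1 + bR * Xv i)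

/-- `G_m^{[p/q]} = Σ_{s≥0} (−β)^s (∏_{i=q}^p (1+βx_i)) h_{m+s}(x_q,…,x_p)`,
defined coefficientwise (only the terms with `m + s ≤ deg d` can contribute to the
coefficient at a monomial `d`). -/
def Gsk (p q : ℕ) (m : ℤ) : R := fun d =>
  ∑ s ∈ Finset.range (((degSum d : ℤ) - m).toNat + 1),
    (-Polynomial.X : A) ^ s * MvPowerSeries.coeff (R := A) d (prodOneAdd q p * hsym q p (m + s))

/-- `G_m^{[p]} = G_m^{[p/1]}` -/
def Gk (p : ℕ) (m : ℤ) : R := Gsk p 1 m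

/-- the geometric series `Σ_{s≥0} (−β x_i)^s = 1/(1+βx_i)` -/
def geom (i : ℕ) : R := fun d =>
  if d.support ⊆ {i} then (-Polynomial.X : A) ^ (d i) else 0

/-- substitution of `x₁ = 0` -/
def setX1Zero (f : R) : R := fun d => if d 1 = 0 then f d else 0

/-- generalized binomial coefficient `C(c,s) = c(c−1)⋯(c−s+1)/s!` for `c : ℤ` -/
def intChoose (c : ℤ) (s : ℕ) : ℤ :=
  if 0 ≤ c then (c.toNat.choose s : ℤ) else (-1) ^ s * (((s : ℤ) - 1 - c).toNat.choose s : ℤ)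

/-- `Σ_{s≥0} C(c,s) β^s G_{m+s}^{[p/q]}`, defined coefficientwise. -/
def JT (p q : ℕ) (c m : ℤ) : R := fun d =>
  ∑ s ∈ Finset.range (((degSum d : ℤ) - m).toNat + 1),
    ((intChoose c s : ℤ) : A) * Polynomial.X ^ s * MvPowerSeries.coeff (R := A) d (Gsk p q (m + s))

/-- the Jacobi–Trudi type determinant `G̃_{λ/μ,f/g}` (rows and columns indexed by
`Fin r`, with `i : Fin r` representing the 1-based index `i+1`). -/
def GtildeSkew (r : ℕ) (lam mu f g : Fin r → ℕ) : R :=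
  Matrix.det (Matrix.of fun i j : Fin r =>
    JT (f i) (g j) ((i : ℤ) - (j : ℤ))
      ((lam i : ℤ) - (mu j : ℤ) + (j : ℤ) - (i : ℤ)))

/-- the Jacobi–Trudi type determinant `G̃_{λ,f}` -/
def Gtilde (r : ℕ) (lam f : Fin r → ℕ) : R :=
  GtildeSkew r lam (fun _ => 0) f (fun _ => 1)

/-- flagged skew set-valued tableaux of shape `λ/μ` with flagging `f/g`:
a tableau assigns to the box in row `i` (1-based index `i+1`), column `j`
(with `μᵢ < j ≤ λᵢ`) a nonempty subset of `{gᵢ,…,fᵢ}`, weakly increasing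
along rows and strictly increasing along columns; boxes outside the shape
carry `∅`. -/
def IsFSVT (r : ℕ) (lam mu f g : Fin r → ℕ) (T : Fin r × ℕ → Finset ℕ) : Prop :=
  (∀ (i : Fin r) (j : ℕ), ¬ (mu i < j ∧ j ≤ lam i) → T (i, j) = ∅) ∧
  (∀ (i : Fin r) (j : ℕ), mu i < j → j ≤ lam i → (T (i, j)).Nonempty) ∧
  (∀ (i : Fin r) (j k : ℕ), k ∈ T (i, j) → g i ≤ k ∧ k ≤ f i) ∧
  (∀ (i : Fin r) (j : ℕ), mu i < j → j + 1 ≤ lam i →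
     ∀ a ∈ T (i, j), ∀ b ∈ T (i, j + 1), a ≤ b) ∧
  (∀ (i : Fin r) (h : (i : ℕ) + 1 < r) (j : ℕ),
     mu i < j → j ≤ lam i → mu ⟨(i : ℕ) + 1, h⟩ < j → j ≤ lam ⟨(i : ℕ) + 1, h⟩ →
     ∀ a ∈ T (i, j), ∀ b ∈ T (⟨(i : ℕ) + 1, h⟩, j), a < b)

/-- the total number `|T|` of entries of a tableau -/
def entriesCount (r : ℕ) (lam mu : Fin r → ℕ) (T : Fin r × ℕ → Finset ℕ) : ℕ :=
  ∑ i : Fin r, ∑ j ∈ Finset.Ioc (mu i) (lam i), (T (i, j)).card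

/-- `|λ/μ|` -/
def shapeSize (r : ℕ) (lam mu : Fin r → ℕ) : ℕ := ∑ i : Fin r, (lam i - mu i)

/-- the weight `β^{|T|−|λ/μ|} ∏_{k∈T} x_k` of a tableau -/
def wt (r : ℕ) (lam mu : Fin r → ℕ) (T : Fin r × ℕ → Finset ℕ) : R :=
  bR ^ (entriesCount r lam mu T - shapeSize r lam mu) *
    ∏ i : Fin r, ∏ j ∈ Finset.Ioc (mu i) (lam i), ∏ k ∈ T (i, j), Xv k

/-- the flagged skew Grothendieck polynomial `G_{λ/μ,f/g}` as the (finite) sum of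
the weights of all flagged skew set-valued tableaux -/
def GF (r : ℕ) (lam mu f g : Fin r → ℕ) : R :=
  ∑ᶠ (T : Fin r × ℕ → Finset ℕ) (_ : IsFSVT r lam mu f g T), wt r lam mu T

/- permutations: `w ∈ S_n` is encoded as a permutation of `ℕ` fixing `0` and
everything `> n`. -/

/-- `w` belongs to `S_n` -/
def isSn (n : ℕ) (w : Equiv.Perm ℕ) : Prop := ∀ k, k = 0 ∨ n < k → w k = k

/-- Coxeter length = number of inversions -/
def len (n : ℕ) (w : Equiv.Perm ℕ) : ℕ :=
  (((Finset.Icc 1 n) ×ˢ (Finset.Icc 1 n)).filter fun pr : ℕ × ℕ =>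
    pr.1 < pr.2 ∧ w pr.2 < w pr.1).card

/-- the rank function `r_w(p,q) = #{i ≤ p : w(i) ≤ q}` -/
def rankf (w : Equiv.Perm ℕ) (p q : ℕ) : ℕ :=
  ((Finset.Icc 1 p).filter fun i => w i ≤ q).card

/-- the diagram `D(w)` -/
def inD (n : ℕ) (w : Equiv.Perm ℕ) (p q : ℕ) : Prop :=
  1 ≤ p ∧ p ≤ n ∧ 1 ≤ q ∧ q ≤ n ∧ q < w p ∧ p < w.symm q

/-- the essential set `Ess(w)` -/
def inEss (n : ℕ) (w : Equiv.Perm ℕ) (p q : ℕ) : Prop :=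
  inD n w p q ∧ ¬ inD n w (p+1) q ∧ ¬ inD n w p (q+1)

/-- `w ∈ S_n` is vexillary: it avoids the pattern 2143 -/
def Vexillary (n : ℕ) (w : Equiv.Perm ℕ) : Prop :=
  ¬ ∃ a b c d : ℕ, 1 ≤ a ∧ a < b ∧ b < c ∧ c < d ∧ d ≤ n ∧
      w b < w a ∧ w a < w d ∧ w d < w c

section Aux

open MvPowerSeries Finsupp

local notation "cf" => MvPowerSeries.coeff (R := A)

lemma degSum_add (a b : ℕ →₀ ℕ) : degSum (a + b) = degSum a + degSum b := by
  classical
  simpa [degSum] using Finsupp.sum_add_index' (h := fun (_ : ℕ) (n : ℕ) => n)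
    (fun _ => rfl) (fun _ _ _ => rfl) (f := a) (g := b)

lemma degSum_single (i n : ℕ) : degSum (Finsupp.single i n) = n := by
  classical
  simp [degSum, Finsupp.sum_single_index]

lemma coeff_X1_mul (f : R) (d : ℕ →₀ ℕ) :
    cf d (Xv 1 * f) = if 1 ≤ d 1 then cf (d - Finsupp.single 1 1) f else 0 := by
  rw [Xv, MvPowerSeries.X, MvPowerSeries.coeff_monomial_mul]
  simp [Finsupp.single_le_iff]

lemma sub_single_add (d : ℕ →₀ ℕ) (h : 1 ≤ d 1) :
    (d - Finsupp.single 1 1) + Finsupp.single 1 1 = d :=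
  tsub_add_cancel_of_le (Finsupp.single_le_iff.2 h)

lemma degSum_sub_single (d : ℕ →₀ ℕ) (h : 1 ≤ d 1) :
    degSum (d - Finsupp.single 1 1) + 1 = degSum d := by
  conv_rhs => rw [← sub_single_add d h]
  rw [degSum_add, degSum_single]

lemma coeff_hsym (q p : ℕ) (j : ℤ) (d : ℕ →₀ ℕ) :
    cf d (hsym q p j)
      = if (∀ k ∈ d.support, q ≤ k ∧ k ≤ p) ∧ (degSum d : ℤ) = j then 1 else 0 := rfl

lemma coeff_mul_hsym_zero (f : R) (q p : ℕ) (j : ℤ) (d : ℕ →₀ ℕ)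
    (h : (degSum d : ℤ) < j) : cf d (f * hsym q p j) = 0 := by
  classical
  rw [MvPowerSeries.coeff_mul]
  refine Finset.sum_eq_zero fun x hx => ?_
  rw [Finset.HasAntidiagonal.mem_antidiagonal] at hx
  have hb : degSum x.2 ≤ degSum d := by
    rw [← hx, degSum_add]; omega
  have : cf x.2 (hsym q p j) = 0 := by
    rw [coeff_hsym, if_neg]
    rintro ⟨-, h2⟩; omega
  rw [this, mul_zero]

lemma Gsk_coeff (p q : ℕ) (m : ℤ) (d : ℕ →₀ ℕ) :
    cf d (Gsk p q m) = ∑ s ∈ Finset.range (((degSum d : ℤ) - m).toNat + 1),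
      (-Polynomial.X : A) ^ s * cf d (prodOneAdd q p * hsym q p (m + s)) := rfl

lemma Gsk_coeff_ext (p q : ℕ) (m : ℤ) (d : ℕ →₀ ℕ) (N : ℕ)
    (hN : ((degSum d : ℤ) - m).toNat + 1 ≤ N) :
    cf d (Gsk p q m) = ∑ s ∈ Finset.range N,
      (-Polynomial.X : A) ^ s * cf d (prodOneAdd q p * hsym q p (m + s)) := by
  rw [Gsk_coeff]
  refine Finset.sum_subset (Finset.range_subset_range.2 hN) fun s hs hs' => ?_
  rw [Finset.mem_range] at hs hs'
  have h1 : ((degSum d : ℤ) - m).toNat < s := by omega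
  have h2 : (degSum d : ℤ) - m ≤ (((degSum d : ℤ) - m).toNat : ℤ) := Int.self_le_toNat _
  have : (degSum d : ℤ) < m + s := by omega
  rw [coeff_mul_hsym_zero _ _ _ _ _ this, mul_zero]

end Aux


section Aux2

open MvPowerSeries Finsupp

local notation "cf" => MvPowerSeries.coeff (R := A)

/-- `h_j(x₁,…,x_p) = x₁ h_{j-1}(x₁,…,x_p) + h_j(x₂,…,x_p)` -/
lemma hsym_rec (p : ℕ) (hp : 1 ≤ p) (j : ℤ) :
    hsym 1 p j = Xv 1 * hsym 1 p (j - 1) + hsym 2 p j := by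
  apply MvPowerSeries.ext; intro d
  rw [map_add, coeff_X1_mul, coeff_hsym, coeff_hsym, coeff_hsym]
  by_cases h1 : 1 ≤ d 1
  · have h1s : (1 : ℕ) ∈ d.support := Finsupp.mem_support_iff.2 (by omega)
    have hno : ¬ ((∀ k ∈ d.support, 2 ≤ k ∧ k ≤ p) ∧ (degSum d : ℤ) = j) := by
      rintro ⟨hc, -⟩; have := (hc 1 h1s).1; omega
    rw [if_pos h1, if_neg hno, add_zero]
    set e := d - Finsupp.single 1 1 with he
    have happ : ∀ k, k ≠ 1 → e k = d k := by
      intro k hk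
      rw [he, Finsupp.tsub_apply, Finsupp.single_apply, if_neg (Ne.symm hk)]
      omega
    have hcond : (∀ k ∈ d.support, 1 ≤ k ∧ k ≤ p) ↔ (∀ k ∈ e.support, 1 ≤ k ∧ k ≤ p) := by
      constructor
      · intro hc k hk
        rcases eq_or_ne k 1 with rfl | hne
        · exact ⟨le_refl 1, hp⟩
        · exact hc k (Finsupp.mem_support_iff.2 (by
            rw [← happ k hne]; exact Finsupp.mem_support_iff.1 hk))
      · intro hc k hk
        rcases eq_or_ne k 1 with rfl | hne
        · exact ⟨le_refl 1, hp⟩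
        · refine hc k (Finsupp.mem_support_iff.2 ?_)
          rw [happ k hne]; exact Finsupp.mem_support_iff.1 hk
    have hdeg : ((degSum d : ℤ) = j) ↔ ((degSum e : ℤ) = j - 1) := by
      have := degSum_sub_single d h1
      rw [← he] at this; omega
    by_cases hc : (∀ k ∈ e.support, 1 ≤ k ∧ k ≤ p) ∧ (degSum e : ℤ) = j - 1
    · have hc' : (∀ k ∈ d.support, 1 ≤ k ∧ k ≤ p) ∧ (degSum d : ℤ) = j :=
        ⟨hcond.2 hc.1, hdeg.2 hc.2⟩
      rw [if_pos hc, if_pos hc']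
    · have hc' : ¬ ((∀ k ∈ d.support, 1 ≤ k ∧ k ≤ p) ∧ (degSum d : ℤ) = j) :=
        fun hh => hc ⟨hcond.1 hh.1, hdeg.1 hh.2⟩
      rw [if_neg hc, if_neg hc']
  · rw [if_neg h1, zero_add]
    have hns : (1 : ℕ) ∉ d.support := fun hh => h1 (by
      have := Finsupp.mem_support_iff.1 hh; omega)
    have hcond : (∀ k ∈ d.support, 1 ≤ k ∧ k ≤ p) ↔ (∀ k ∈ d.support, 2 ≤ k ∧ k ≤ p) := by
      constructor
      · intro hc k hk
        have hk1 : k ≠ 1 := fun hh => hns (hh ▸ hk)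
        have := hc k hk; omega
      · intro hc k hk
        have := hc k hk; omega
    by_cases hc : (∀ k ∈ d.support, 2 ≤ k ∧ k ≤ p) ∧ (degSum d : ℤ) = j
    · have hc' : (∀ k ∈ d.support, 1 ≤ k ∧ k ≤ p) ∧ (degSum d : ℤ) = j :=
        ⟨hcond.2 hc.1, hc.2⟩
      rw [if_pos hc, if_pos hc']
    · have hc' : ¬ ((∀ k ∈ d.support, 1 ≤ k ∧ k ≤ p) ∧ (degSum d : ℤ) = j) :=
        fun hh => hc ⟨hcond.1 hh.1, hh.2⟩
      rw [if_neg hc, if_neg hc']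

lemma prodOneAdd_split (p : ℕ) (hp : 1 ≤ p) :
    prodOneAdd 1 p = (1 + bR * Xv 1) * prodOneAdd 2 p := by
  have : Finset.Icc 1 p = insert 1 (Finset.Icc 2 p) := by
    ext k; simp only [Finset.mem_Icc, Finset.mem_insert]; omega
  rw [prodOneAdd, prodOneAdd, this, Finset.prod_insert (by simp)]

end Aux2

section Aux3

open MvPowerSeries Finsupp

local notation "cf" => MvPowerSeries.coeff (R := A)

/-- series with no monomial involving `x₁` -/
def Free1 (f : R) : Prop := ∀ d : ℕ →₀ ℕ, d 1 ≠ 0 → cf d f = 0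

lemma free_one : Free1 1 := by
  intro d hd
  rw [MvPowerSeries.coeff_one, if_neg]
  intro h; rw [h] at hd; simp at hd

lemma free_C (a : A) : Free1 (MvPowerSeries.C (σ := ℕ) (R := A) a) := by
  intro d hd
  rw [MvPowerSeries.coeff_C, if_neg]
  intro h; rw [h] at hd; simp at hd

lemma free_X (i : ℕ) (hi : i ≠ 1) : Free1 (Xv i) := by
  intro d hd
  rw [Xv, MvPowerSeries.coeff_X, if_neg]
  intro h
  rw [h, Finsupp.single_apply, if_neg hi] at hd
  exact hd rfl

lemma free_add {f g : R} (hf : Free1 f) (hg : Free1 g) : Free1 (f + g) := by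
  intro d hd; rw [map_add, hf d hd, hg d hd, add_zero]

lemma free_mul {f g : R} (hf : Free1 f) (hg : Free1 g) : Free1 (f * g) := by
  intro d hd
  classical
  rw [MvPowerSeries.coeff_mul]
  refine Finset.sum_eq_zero fun x hx => ?_
  rw [Finset.HasAntidiagonal.mem_antidiagonal] at hx
  have hx1 : x.1 1 + x.2 1 = d 1 := by rw [← hx]; rfl
  by_cases h1 : x.1 1 = 0
  · have h2 : x.2 1 ≠ 0 := by omega
    rw [hg x.2 h2, mul_zero]
  · rw [hf x.1 h1, zero_mul]

lemma free_mul_free {f g : R} (hf : Free1 f) (hg : Free1 g) : Free1 (f * g) := free_mul hf hg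

lemma free_hsym (q p : ℕ) (j : ℤ) (hq : 2 ≤ q) : Free1 (hsym q p j) := by
  intro d hd
  rw [coeff_hsym, if_neg]
  rintro ⟨hc, -⟩
  have := (hc 1 (Finsupp.mem_support_iff.2 hd)).1
  omega

lemma free_prodOneAdd (p : ℕ) : Free1 (prodOneAdd 2 p) := by
  rw [prodOneAdd]
  refine Finset.prod_induction _ Free1 (fun a b ha hb => free_mul ha hb) free_one ?_
  intro i hi
  rw [Finset.mem_Icc] at hi
  exact free_add free_one (free_mul (free_C _) (free_X i (by omega)))

lemma free_Gsk2 (p : ℕ) (m : ℤ) : Free1 (Gsk p 2 m) := by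
  intro d hd
  rw [Gsk_coeff]
  refine Finset.sum_eq_zero fun s _ => ?_
  rw [free_mul (free_prodOneAdd p) (free_hsym 2 p (m + s) le_rfl) d hd, mul_zero]

lemma coeff_geom (d : ℕ →₀ ℕ) :
    cf d (geom 1) = if d.support ⊆ {1} then (-Polynomial.X : A) ^ (d 1) else 0 := rfl

lemma geom_mul_unit : geom 1 * (1 + bR * Xv 1) = 1 := by
  have hring : geom 1 * (1 + bR * Xv 1) = geom 1 + bR * (Xv 1 * geom 1) := by ring
  rw [hring]
  apply MvPowerSeries.ext; intro d
  rw [map_add, MvPowerSeries.coeff_one, bR, MvPowerSeries.coeff_C_mul, coeff_X1_mul,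
    coeff_geom]
  by_cases hd0 : d = 0
  · subst hd0
    rw [if_pos rfl, if_pos (by simp), if_neg (by simp)]
    simp
  · rw [if_neg hd0]
    by_cases hs : d.support ⊆ {1}
    · have hd1 : d 1 ≠ 0 := by
        intro h
        apply hd0
        have : d.support = ∅ := by
          refine Finset.eq_empty_of_forall_notMem fun k hk => ?_
          have hk1 : k = 1 := Finset.mem_singleton.1 (hs hk)
          subst hk1
          exact Finsupp.mem_support_iff.1 hk h
        exact Finsupp.support_eq_empty.1 this
      rw [if_pos hs, if_pos (by omega : 1 ≤ d 1), coeff_geom]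
      set e := d - Finsupp.single 1 1 with he
      have hes : e.support ⊆ {1} := by
        intro k hk
        refine hs (Finsupp.mem_support_iff.2 ?_)
        have h1 : e k ≤ d k := by
          rw [he, Finsupp.tsub_apply]; omega
        have := Finsupp.mem_support_iff.1 hk
        omega
      have he1 : e 1 = d 1 - 1 := by
        rw [he, Finsupp.tsub_apply, Finsupp.single_apply, if_pos rfl]
      rw [if_pos hes, he1]
      obtain ⟨n, hn⟩ : ∃ n, d 1 = n + 1 := ⟨d 1 - 1, by omega⟩
      rw [hn]
      simp only [Nat.add_sub_cancel, pow_succ]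
      ring
    · rw [if_neg hs]
      by_cases hd1 : 1 ≤ d 1
      · rw [if_pos hd1, coeff_geom, if_neg, mul_zero, add_zero]
        intro hsub
        apply hs
        intro k hk
        by_cases hk1 : k = 1
        · simp [hk1]
        · refine hsub (Finsupp.mem_support_iff.2 ?_)
          rw [Finsupp.tsub_apply, Finsupp.single_apply, if_neg (Ne.symm hk1)]
          have := Finsupp.mem_support_iff.1 hk
          omega
      · rw [if_neg hd1, mul_zero, add_zero]

lemma hsym_eq_of_x1 (p : ℕ) (j : ℤ) (b : ℕ →₀ ℕ) (hb : b 1 = 0) :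
    cf b (hsym 1 p j) = cf b (hsym 2 p j) := by
  rw [coeff_hsym, coeff_hsym]
  have hcond : (∀ k ∈ b.support, 1 ≤ k ∧ k ≤ p) ↔ (∀ k ∈ b.support, 2 ≤ k ∧ k ≤ p) := by
    constructor
    · intro hc k hk
      have hk1 : k ≠ 1 := fun hh => (Finsupp.mem_support_iff.1 hk) (hh ▸ hb)
      have := hc k hk; omega
    · intro hc k hk
      have := hc k hk; omega
  by_cases hc : (∀ k ∈ b.support, 1 ≤ k ∧ k ≤ p) ∧ (degSum b : ℤ) = j
  · rw [if_pos hc, if_pos ⟨hcond.1 hc.1, hc.2⟩]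
  · have hc' : ¬ ((∀ k ∈ b.support, 2 ≤ k ∧ k ≤ p) ∧ (degSum b : ℤ) = j) :=
      fun hh => hc ⟨hcond.2 hh.1, hh.2⟩
    rw [if_neg hc, if_neg hc']

lemma coeff_P1_hsym (p : ℕ) (hp : 1 ≤ p) (j : ℤ) (d : ℕ →₀ ℕ) (hd : d 1 = 0) :
    cf d (prodOneAdd 1 p * hsym 1 p j) = cf d (prodOneAdd 2 p * hsym 2 p j) := by
  rw [prodOneAdd_split p hp]
  have hring : (1 + bR * Xv 1) * prodOneAdd 2 p * hsym 1 p j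
      = prodOneAdd 2 p * hsym 1 p j + bR * (Xv 1 * (prodOneAdd 2 p * hsym 1 p j)) := by
    ring
  rw [hring, map_add, bR, MvPowerSeries.coeff_C_mul, coeff_X1_mul,
    if_neg (by omega : ¬ 1 ≤ d 1), mul_zero, add_zero]
  classical
  rw [MvPowerSeries.coeff_mul, MvPowerSeries.coeff_mul]
  refine Finset.sum_congr rfl fun x hx => ?_
  rw [Finset.HasAntidiagonal.mem_antidiagonal] at hx
  have hx1 : x.1 1 + x.2 1 = d 1 := by rw [← hx]; rfl
  rw [hsym_eq_of_x1 p j x.2 (by omega)]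

lemma setX1Zero_Gk (p : ℕ) (hp : 1 ≤ p) (m : ℤ) : setX1Zero (Gk p m) = Gsk p 2 m := by
  apply MvPowerSeries.ext; intro d
  have hL : cf d (setX1Zero (Gk p m)) = if d 1 = 0 then cf d (Gk p m) else 0 := rfl
  rw [hL]
  by_cases hd : d 1 = 0
  · rw [if_pos hd]
    rw [show (Gk p m) = Gsk p 1 m from rfl, Gsk_coeff, Gsk_coeff]
    exact Finset.sum_congr rfl fun s _ => by rw [coeff_P1_hsym p hp (m + s) d hd]
  · rw [if_neg hd, free_Gsk2 p m d hd]

end Aux3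

section Aux4

open MvPowerSeries Finsupp

local notation "cf" => MvPowerSeries.coeff (R := A)

lemma Gk_rec (p : ℕ) (hp : 1 ≤ p) (m : ℤ) :
    Gk p m = Xv 1 * Gk p (m - 1) + (1 + bR * Xv 1) * Gsk p 2 m := by
  have hU : ∀ f : R, (1 + bR * Xv 1) * f = f + bR * (Xv 1 * f) := fun f => by ring
  have hps : ∀ s : ℕ, prodOneAdd 1 p * hsym 1 p (m + s)
      = Xv 1 * (prodOneAdd 1 p * hsym 1 p (m - 1 + s))
        + (1 + bR * Xv 1) * (prodOneAdd 2 p * hsym 2 p (m + s)) := by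
    intro s
    conv_lhs => rw [hsym_rec p hp (m + s)]
    have e1 : m + (s : ℤ) - 1 = m - 1 + s := by ring
    rw [e1, prodOneAdd_split p hp]
    ring
  apply MvPowerSeries.ext; intro d
  have claim1 : cf d (Xv 1 * Gk p (m - 1))
      = ∑ s ∈ Finset.range (((degSum d : ℤ) - m).toNat + 1),
          (-Polynomial.X : A) ^ s
            * cf d (Xv 1 * (prodOneAdd 1 p * hsym 1 p (m - 1 + s))) := by
    rw [coeff_X1_mul]
    by_cases hd : 1 ≤ d 1
    · rw [if_pos hd]
      have hdeg := degSum_sub_single d hd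
      have hNe : ((degSum (d - Finsupp.single 1 1) : ℤ) - (m - 1)).toNat + 1
          = ((degSum d : ℤ) - m).toNat + 1 := by
        have h' : ((degSum (d - Finsupp.single 1 1) : ℤ) - (m - 1)) = (degSum d : ℤ) - m := by
          omega
        rw [h']
      rw [show Gk p (m - 1) = Gsk p 1 (m - 1) from rfl, Gsk_coeff, hNe]
      refine Finset.sum_congr rfl fun s _ => ?_
      rw [coeff_X1_mul, if_pos hd]
    · rw [if_neg hd]
      refine (Finset.sum_eq_zero fun s _ => ?_).symm
      rw [coeff_X1_mul, if_neg hd, mul_zero]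
  have claim2 : cf d ((1 + bR * Xv 1) * Gsk p 2 m)
      = ∑ s ∈ Finset.range (((degSum d : ℤ) - m).toNat + 1),
          (-Polynomial.X : A) ^ s
            * cf d ((1 + bR * Xv 1) * (prodOneAdd 2 p * hsym 2 p (m + s))) := by
    have hR : ∑ s ∈ Finset.range (((degSum d : ℤ) - m).toNat + 1),
          (-Polynomial.X : A) ^ s
            * cf d ((1 + bR * Xv 1) * (prodOneAdd 2 p * hsym 2 p (m + s)))
        = (∑ s ∈ Finset.range (((degSum d : ℤ) - m).toNat + 1),
            (-Polynomial.X : A) ^ s * cf d (prodOneAdd 2 p * hsym 2 p (m + s)))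
          + ∑ s ∈ Finset.range (((degSum d : ℤ) - m).toNat + 1),
              (-Polynomial.X : A) ^ s * (Polynomial.X *
                (if 1 ≤ d 1 then
                  cf (d - Finsupp.single 1 1) (prodOneAdd 2 p * hsym 2 p (m + s)) else 0)) := by
      rw [← Finset.sum_add_distrib]
      refine Finset.sum_congr rfl fun s _ => ?_
      rw [hU, map_add, bR, MvPowerSeries.coeff_C_mul, coeff_X1_mul, mul_add]
    rw [hR, hU, map_add, bR, MvPowerSeries.coeff_C_mul, coeff_X1_mul]
    congr 1
    by_cases hd : 1 ≤ d 1
    · simp only [if_pos hd]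
      have hle : ((degSum (d - Finsupp.single 1 1) : ℤ) - m).toNat + 1
          ≤ ((degSum d : ℤ) - m).toNat + 1 := by
        have := degSum_sub_single d hd
        omega
      rw [Gsk_coeff_ext p 2 m _ _ hle, Finset.mul_sum]
      exact Finset.sum_congr rfl fun s _ => by ring
    · simp only [if_neg hd, mul_zero, Finset.sum_const_zero]
  have expand : cf d (Gk p m)
      = (∑ s ∈ Finset.range (((degSum d : ℤ) - m).toNat + 1),
          (-Polynomial.X : A) ^ s
            * cf d (Xv 1 * (prodOneAdd 1 p * hsym 1 p (m - 1 + s))))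
        + ∑ s ∈ Finset.range (((degSum d : ℤ) - m).toNat + 1),
            (-Polynomial.X : A) ^ s
              * cf d ((1 + bR * Xv 1) * (prodOneAdd 2 p * hsym 2 p (m + s))) := by
    rw [show Gk p m = Gsk p 1 m from rfl, Gsk_coeff, ← Finset.sum_add_distrib]
    refine Finset.sum_congr rfl fun s _ => ?_
    rw [hps s, map_add, mul_add]
  rw [map_add, claim1, claim2]
  exact expand

end Aux4

theorem stmt4 (m : ℤ) (p : ℕ) (hp : 1 ≤ p) :
    Gk p m - (Xv 1 * geom 1) * Gk p (m-1) - (Xv 1 * geom 1) * (bR * Gk p m)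
      = setX1Zero (Gk p m) := by
  have h1 := geom_mul_unit
  have h2 : Gk p m - Xv 1 * Gk p (m - 1) = (1 + bR * Xv 1) * setX1Zero (Gk p m) := by
    rw [setX1Zero_Gk p hp m]
    rw [Gk_rec p hp m]
    ring
  linear_combination geom 1 * h2 + (setX1Zero (Gk p m) - Gk p m) * h1

end
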